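/- Let G be a weighted graph with normalized Laplacian 𝓛_G = D^{-1/2} L_G D^{-1/2}, where D is the diagonal degree matrix with positive diagonal. For any k-way partition A_1, …, A_k of the vertex set into nonempty sets, max_{1≤i≤k} φ_G(A_i) ≥ λ_k(𝓛_G)/2, where λ_k is the k-th smallest eigenvalue of 𝓛_G. Consequently the k-way expansion constant ρ(k) = min over k-way partitions of max_i φ(A_i) satisfies ρ(k) ≥ λ_k(𝓛_G)/2. -/

import Mathlib

open Matrix BigOperators

noncomputable def deg {n : ℕ} (w : Fin n → Fin n → ℝ) (v : Fin n) : ℝ := ∑ u, w v u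

noncomputable def lapl {n : ℕ} (w : Fin n → Fin n → ℝ) : Matrix (Fin n) (Fin n) ℝ :=
  Matrix.diagonal (deg w) - Matrix.of w

noncomputable def normLapl {n : ℕ} (w : Fin n → Fin n → ℝ) : Matrix (Fin n) (Fin n) ℝ :=
  Matrix.diagonal (fun v => (deg w v) ^ (-(1:ℝ)/2)) * lapl w *
    Matrix.diagonal (fun v => (deg w v) ^ (-(1:ℝ)/2))

noncomputable def conductance {n : ℕ} (w : Fin n → Fin n → ℝ) (S : Finset (Fin n)) : ℝ :=
  (∑ u ∈ S, ∑ v ∈ Sᶜ, w u v) / ∑ u ∈ S, deg w u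

/-- easy direction of the higher-order Cheeger inequality: any k-way
partition has a part of conductance at least λ_k(𝓛)/2; hence ρ(k) ≥ λ_k(𝓛)/2. -/
theorem stmt9 {n k : ℕ} (hk : 1 ≤ k) (hkn : k ≤ n)
    (w : Fin n → Fin n → ℝ)
    (hsym : ∀ u v, w u v = w v u) (hnonneg : ∀ u v, 0 ≤ w u v)
    (hdeg : ∀ v, 0 < deg w v)
    (hH : (normLapl w).IsHermitian)
    (A : Fin k → Finset (Fin n))
    (hne : ∀ i, (A i).Nonempty)
    (hdisj : ∀ i j, i ≠ j → Disjoint (A i) (A j))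
    (hcover : ∀ v, ∃ i, v ∈ A i) :
    ∃ i, hH.eigenvalues (Tuple.sort hH.eigenvalues ⟨k - 1, by omega⟩) / 2 ≤
      conductance w (A i) := by
  classical
  by_contra hcon
  push_neg at hcon
  set μ : Fin n → ℝ := hH.eigenvalues with hμdef
  set σ : Equiv.Perm (Fin n) := Tuple.sort hH.eigenvalues with hσdef
  set lam : ℝ := μ (σ ⟨k - 1, by omega⟩) with hlamdef
  -- the part function
  set p : Fin n → Fin k := fun v => (hcover v).choose with hpdef
  have hp : ∀ v, v ∈ A (p v) := fun v => (hcover v).choose_spec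
  have hmem : ∀ v i, v ∈ A i ↔ p v = i := by
    intro v i
    constructor
    · intro hv
      by_contra hne'
      exact Finset.disjoint_left.mp (hdisj _ _ hne') (hp v) hv
    · rintro rfl; exact hp v
  have hAfib : ∀ i, A i = Finset.univ.filter (fun v => p v = i) := by
    intro i; ext v; simp [hmem]
  have hAc : ∀ i v, v ∈ (A i)ᶜ ↔ p v ≠ i := by
    intro i v; simp [hmem]
  -- the small set of eigenvalue indices below lam
  set Tc : Finset (Fin n) := Finset.univ.filter (fun j => μ j < lam) with hTcdef
  have hTcard : Tc.card < k := by
    have hsub : Tc ⊆ (Finset.Iio ((⟨k - 1, by omega⟩ : Fin n))).image σ := by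
      intro j hj
      have hjlt : μ j < lam := by simpa [hTcdef] using hj
      refine Finset.mem_image.2 ⟨σ.symm j, ?_, σ.apply_symm_apply j⟩
      rw [Finset.mem_Iio]
      by_contra h
      push_neg at h
      have hmono := Tuple.monotone_sort hH.eigenvalues h
      simp only [Function.comp_apply] at hmono
      rw [show Tuple.sort hH.eigenvalues (σ.symm j) = σ (σ.symm j) from rfl,
        σ.apply_symm_apply] at hmono
      exact absurd hjlt (not_lt.2 hmono)
    calc Tc.card ≤ ((Finset.Iio ((⟨k - 1, by omega⟩ : Fin n))).image σ).card :=
          Finset.card_le_card hsub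
      _ ≤ (Finset.Iio ((⟨k - 1, by omega⟩ : Fin n))).card := Finset.card_image_le
      _ = k - 1 := by rw [Fin.card_Iio]
      _ < k := by omega
  set b := hH.eigenvectorBasis with hbdef
  -- the linear map whose kernel gives the test vector
  set F : (Fin k → ℝ) →ₗ[ℝ] ({j // j ∈ Tc} → ℝ) :=
    { toFun := fun c j => ∑ v, b j.1 v * ((deg w v) ^ ((1:ℝ)/2) * c (p v))
      map_add' := by
        intro c d; funext j
        rw [Pi.add_apply, ← Finset.sum_add_distrib]
        exact Finset.sum_congr rfl (fun v _ => by simp [Pi.add_apply]; ring)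
      map_smul' := by
        intro r c; funext j
        simp only [RingHom.id_apply, Pi.smul_apply, smul_eq_mul, Finset.mul_sum]
        exact Finset.sum_congr rfl (fun v _ => by simp [Pi.smul_apply, smul_eq_mul]; ring) }
    with hFdef
  have hnotinj : ¬ Function.Injective F := by
    intro hinj
    have h1 := LinearMap.finrank_le_finrank_of_injective hinj
    rw [Module.finrank_fintype_fun_eq_card, Module.finrank_fintype_fun_eq_card,
      Fintype.card_fin, Fintype.card_coe] at h1
    omega
  have hker : ∃ c : Fin k → ℝ, c ≠ 0 ∧ F c = 0 := by
    rw [← LinearMap.ker_eq_bot] at hnotinj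
    obtain ⟨c, hc, hc0⟩ := Submodule.exists_mem_ne_zero_of_ne_bot hnotinj
    exact ⟨c, hc0, hc⟩
  obtain ⟨c, hc0, hFc⟩ := hker
  -- test vectors
  set x : Fin n → ℝ := fun v => (deg w v) ^ ((1:ℝ)/2) * c (p v) with hxdef
  set y : Fin n → ℝ := fun v => c (p v) with hydef
  set a : Fin n → ℝ := fun j => ∑ v, b j v * x v with hadef
  have ha0 : ∀ j ∈ Tc, a j = 0 := by
    intro j hj
    have := congrFun hFc ⟨j, hj⟩
    simpa [hFdef, hadef, hxdef] using this
  have hrpow : ∀ v, ((deg w v) ^ (-(1:ℝ)/2)) * x v = y v := by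
    intro v
    rw [hxdef, ← mul_assoc, ← Real.rpow_add (hdeg v)]
    norm_num
    rfl
  have hxsq : ∀ v, x v * x v = deg w v * (y v * y v) := by
    intro v
    rw [hxdef]
    rw [show (deg w v ^ ((1:ℝ)/2) * c (p v)) * (deg w v ^ ((1:ℝ)/2) * c (p v)) =
      (deg w v ^ ((1:ℝ)/2) * deg w v ^ ((1:ℝ)/2)) * (c (p v) * c (p v)) by ring,
      ← Real.rpow_add (hdeg v)]
    norm_num [hydef]
  -- eigen-expansion of x
  have hxsum : ∀ v, x v = ∑ j, a j * b j v := by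
    intro v
    have h1 := b.sum_repr (WithLp.toLp 2 x : EuclideanSpace ℝ (Fin n))
    have h2 : ∀ j, b.repr (WithLp.toLp 2 x : EuclideanSpace ℝ (Fin n)) j = a j := by
      intro j
      rw [b.repr_apply_apply]
      simp [PiLp.inner_apply, RCLike.inner_apply, hadef, mul_comm]
    calc x v = (WithLp.toLp 2 x : EuclideanSpace ℝ (Fin n)) v := rfl
      _ = (∑ j, b.repr (WithLp.toLp 2 x : EuclideanSpace ℝ (Fin n)) j • b j) v := by rw [h1]
      _ = ∑ j, b.repr (WithLp.toLp 2 x : EuclideanSpace ℝ (Fin n)) j * b j v := by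
          rw [WithLp.ofLp_sum, Finset.sum_apply]; rfl
      _ = ∑ j, a j * b j v := by
          exact Finset.sum_congr rfl (fun j _ => by rw [h2 j])
  have heig : ∀ j u, (normLapl w *ᵥ ⇑(b j)) u = μ j * b j u := by
    intro j u
    rw [hH.mulVec_eigenvectorBasis j]
    rfl
  -- Q via eigenvalues
  set Q : ℝ := ∑ v, x v * (normLapl w *ᵥ x) v with hQdef
  have hHx : ∀ u, (normLapl w *ᵥ x) u = ∑ j, (μ j * a j) * b j u := by
    intro u
    calc (normLapl w *ᵥ x) u = ∑ v, normLapl w u v * x v := rfl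
      _ = ∑ v, ∑ j, a j * (normLapl w u v * b j v) := by
          refine Finset.sum_congr rfl (fun v _ => ?_)
          rw [hxsum v, Finset.mul_sum]
          exact Finset.sum_congr rfl (fun j _ => by ring)
      _ = ∑ j, ∑ v, a j * (normLapl w u v * b j v) := Finset.sum_comm
      _ = ∑ j, (μ j * a j) * b j u := by
          refine Finset.sum_congr rfl (fun j _ => ?_)
          rw [← Finset.mul_sum]
          rw [show (∑ v, normLapl w u v * b j v) = (normLapl w *ᵥ ⇑(b j)) u from rfl,
            heig j u]
          ring
  have hQeig : Q = ∑ j, μ j * (a j * a j) := by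
    rw [hQdef]
    calc (∑ v, x v * (normLapl w *ᵥ x) v)
        = ∑ v, ∑ j, (μ j * a j) * (b j v * x v) := by
          refine Finset.sum_congr rfl (fun v _ => ?_)
          rw [hHx v, Finset.mul_sum]
          exact Finset.sum_congr rfl (fun j _ => by ring)
      _ = ∑ j, ∑ v, (μ j * a j) * (b j v * x v) := Finset.sum_comm
      _ = ∑ j, μ j * (a j * a j) := by
          refine Finset.sum_congr rfl (fun j _ => ?_)
          rw [← Finset.mul_sum, show (∑ v, b j v * x v) = a j from rfl]
          ring
  have hnormsum : ∑ v, x v * x v = ∑ j, a j * a j := by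
    calc (∑ v, x v * x v)
        = ∑ v, ∑ j, a j * (b j v * x v) := by
          refine Finset.sum_congr rfl (fun v _ => ?_)
          have h3 : (∑ j, a j * b j v) * x v = ∑ j, a j * (b j v * x v) := by
            rw [Finset.sum_mul]
            exact Finset.sum_congr rfl (fun j _ => by ring)
          rw [← h3, ← hxsum v]
      _ = ∑ j, ∑ v, a j * (b j v * x v) := Finset.sum_comm
      _ = ∑ j, a j * a j := by
          refine Finset.sum_congr rfl (fun j _ => ?_)
          rw [← Finset.mul_sum, show (∑ v, b j v * x v) = a j from rfl]
  have hQge : lam * (∑ v, x v * x v) ≤ Q := by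
    rw [hQeig, hnormsum, Finset.mul_sum]
    refine Finset.sum_le_sum (fun j _ => ?_)
    by_cases hj : j ∈ Tc
    · rw [ha0 j hj]; simp
    · have : lam ≤ μ j := by
        rw [hTcdef] at hj
        simpa using not_lt.1 (by simpa [hTcdef] using hj)
      exact mul_le_mul_of_nonneg_right this (mul_self_nonneg _)
  -- Q via the Laplacian quadratic form
  have hDx : (Matrix.diagonal (fun v => (deg w v) ^ (-(1:ℝ)/2)) *ᵥ x) = y := by
    funext v
    rw [Matrix.mulVec_diagonal]
    exact hrpow v
  have hLy : ∀ v, (lapl w *ᵥ y) v = deg w v * y v - ∑ u, w v u * y u := by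
    intro v
    rw [lapl, Matrix.sub_mulVec, Pi.sub_apply, Matrix.mulVec_diagonal]
    rfl
  have hQlap : Q = (∑ v, deg w v * (y v * y v)) - ∑ v, ∑ u, w v u * (y v * y u) := by
    have hfac : (normLapl w *ᵥ x) =
        (Matrix.diagonal (fun v => (deg w v) ^ (-(1:ℝ)/2)) *ᵥ (lapl w *ᵥ y)) := by
      rw [normLapl, ← hDx, Matrix.mulVec_mulVec, Matrix.mulVec_mulVec, Matrix.mul_assoc]
    rw [hQdef, hfac]
    calc (∑ v, x v * (Matrix.diagonal (fun v => (deg w v) ^ (-(1:ℝ)/2)) *ᵥ (lapl w *ᵥ y)) v)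
        = ∑ v, y v * (lapl w *ᵥ y) v := by
          refine Finset.sum_congr rfl (fun v _ => ?_)
          rw [Matrix.mulVec_diagonal]
          rw [show x v * (deg w v ^ (-(1:ℝ)/2) * (lapl w *ᵥ y) v)
            = (deg w v ^ (-(1:ℝ)/2) * x v) * (lapl w *ᵥ y) v by ring, hrpow v]
      _ = ∑ v, (deg w v * (y v * y v) - ∑ u, w v u * (y v * y u)) := by
          refine Finset.sum_congr rfl (fun v _ => ?_)
          rw [hLy v, mul_sub, Finset.mul_sum]
          congr 1
          · ring
          · exact Finset.sum_congr rfl (fun u _ => by ring)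
      _ = _ := Finset.sum_sub_distrib _ _
  -- symmetrization
  have hdegsum : ∀ v, deg w v * (y v * y v) = ∑ u, w v u * (y v * y v) := by
    intro v; rw [deg, Finset.sum_mul]
  have hQ1 : Q = ∑ v, ∑ u, w v u * (y v * y v - y v * y u) := by
    rw [hQlap, ← Finset.sum_sub_distrib]
    refine Finset.sum_congr rfl (fun v _ => ?_)
    rw [hdegsum v, ← Finset.sum_sub_distrib]
    exact Finset.sum_congr rfl (fun u _ => by ring)
  have hQ2 : Q = ∑ v, ∑ u, w v u * (y u * y u - y v * y u) := by
    rw [hQ1, Finset.sum_comm]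
    refine Finset.sum_congr rfl (fun v _ => Finset.sum_congr rfl (fun u _ => ?_))
    rw [hsym u v]; ring
  have hQ2sum : 2 * Q = ∑ v, ∑ u, w v u * ((y v - y u) * (y v - y u)) := by
    calc 2 * Q = Q + Q := by ring
      _ = (∑ v, ∑ u, w v u * (y v * y v - y v * y u))
            + ∑ v, ∑ u, w v u * (y u * y u - y v * y u) := by rw [← hQ1, ← hQ2]
      _ = ∑ v, ∑ u, (w v u * (y v * y v - y v * y u) + w v u * (y u * y u - y v * y u)) := by
          rw [← Finset.sum_add_distrib]
          exact Finset.sum_congr rfl (fun v _ => Finset.sum_add_distrib.symm)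
      _ = _ := by
          refine Finset.sum_congr rfl (fun v _ => Finset.sum_congr rfl (fun u _ => by ring))
  -- cut and volume
  set cut : Fin k → ℝ := fun i => ∑ u ∈ A i, ∑ v ∈ (A i)ᶜ, w u v with hcutdef
  set vol : Fin k → ℝ := fun i => ∑ u ∈ A i, deg w u with hvoldef
  have hyA : ∀ i, ∀ v ∈ A i, y v = c i := by
    intro i v hv
    rw [hydef]
    simp only []
    rw [(hmem v i).1 hv]
  have hQbound : 2 * Q ≤ 4 * ∑ i, (c i * c i) * cut i := by
    rw [hQ2sum]
    have step1 : (∑ v, ∑ u, w v u * ((y v - y u) * (y v - y u)))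
        ≤ ∑ v, ∑ u, (if p v = p u then 0 else w v u * (2 * (y v * y v) + 2 * (y u * y u))) := by
      refine Finset.sum_le_sum (fun v _ => Finset.sum_le_sum (fun u _ => ?_))
      by_cases h : p v = p u
      · simp only [h, if_true]
        have : y v = y u := by rw [hydef]; simp only []; rw [h]
        rw [this]; simp
      · simp only [h, if_false]
        refine mul_le_mul_of_nonneg_left ?_ (hnonneg v u)
        nlinarith [sq_nonneg (y v + y u)]
    refine step1.trans (le_of_eq ?_)
    have split : (∑ v, ∑ u, (if p v = p u then 0 else w v u * (2 * (y v * y v) + 2 * (y u * y u))))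
        = (∑ v, ∑ u, (if p v = p u then 0 else w v u * (2 * (y v * y v))))
          + ∑ v, ∑ u, (if p v = p u then 0 else w v u * (2 * (y u * y u))) := by
      rw [← Finset.sum_add_distrib]
      refine Finset.sum_congr rfl (fun v _ => ?_)
      rw [← Finset.sum_add_distrib]
      refine Finset.sum_congr rfl (fun u _ => ?_)
      by_cases h : p v = p u <;> simp [h] <;> ring
    have swap2 : (∑ v, ∑ u, (if p v = p u then 0 else w v u * (2 * (y u * y u))))
        = ∑ v, ∑ u, (if p v = p u then 0 else w v u * (2 * (y v * y v))) := by
      rw [Finset.sum_comm]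
      refine Finset.sum_congr rfl (fun v _ => Finset.sum_congr rfl (fun u _ => ?_))
      rw [hsym u v]
      rcases eq_or_ne (p v) (p u) with h | h
      · simp [h]
      · simp [h, Ne.symm h]
    have rowsum : ∀ v, (∑ u, (if p v = p u then 0 else w v u * (2 * (y v * y v))))
        = ∑ u ∈ (A (p v))ᶜ, 2 * (y v * y v) * w v u := by
      intro v
      have hset : (A (p v))ᶜ = Finset.univ.filter (fun u => ¬ p v = p u) := by
        ext u; simp [hAc, eq_comm]
      rw [hset, Finset.sum_filter]
      refine Finset.sum_congr rfl (fun u _ => ?_)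
      by_cases h : p v = p u
      · simp [h]
      · rw [if_neg h, if_pos h]
        ring
    have fib : (∑ v, ∑ u ∈ (A (p v))ᶜ, 2 * (y v * y v) * w v u)
        = 2 * ∑ i, (c i * c i) * cut i := by
      have hmaps : ∀ v ∈ (Finset.univ : Finset (Fin n)), p v ∈ (Finset.univ : Finset (Fin k)) :=
        fun v _ => Finset.mem_univ (p v)
      have h := Finset.sum_fiberwise_of_maps_to hmaps
        (fun v => ∑ u ∈ (A (p v))ᶜ, 2 * (y v * y v) * w v u)
      rw [← h, Finset.mul_sum]
      refine Finset.sum_congr rfl (fun i _ => ?_)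
      rw [← hAfib i, hcutdef]
      simp only []
      rw [show (2:ℝ) * ((c i * c i) * ∑ u ∈ A i, ∑ v' ∈ (A i)ᶜ, w u v')
          = ∑ u ∈ A i, ∑ v' ∈ (A i)ᶜ, 2 * (c i * c i) * w u v' by
        rw [Finset.mul_sum, Finset.mul_sum]
        refine Finset.sum_congr rfl (fun u _ => ?_)
        rw [Finset.mul_sum, Finset.mul_sum]
        exact Finset.sum_congr rfl (fun v' _ => by ring)]
      refine Finset.sum_congr rfl (fun v hv => ?_)
      have hpv : p v = i := (hmem v i).1 hv
      rw [hpv, hyA i v hv]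
    calc (∑ v, ∑ u, (if p v = p u then 0 else w v u * (2 * (y v * y v) + 2 * (y u * y u))))
        = (∑ v, ∑ u, (if p v = p u then 0 else w v u * (2 * (y v * y v))))
          + ∑ v, ∑ u, (if p v = p u then 0 else w v u * (2 * (y u * y u))) := split
      _ = 2 * ∑ v, ∑ u, (if p v = p u then 0 else w v u * (2 * (y v * y v))) := by
          rw [swap2]; ring
      _ = 2 * ∑ v, ∑ u ∈ (A (p v))ᶜ, 2 * (y v * y v) * w v u := by
          rw [Finset.sum_congr rfl (fun v _ => rowsum v)]
      _ = 2 * (2 * ∑ i, (c i * c i) * cut i) := by rw [fib]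
      _ = 4 * ∑ i, (c i * c i) * cut i := by ring
  -- volume identity
  have hvolsum : ∑ v, deg w v * (y v * y v) = ∑ i, (c i * c i) * vol i := by
    have hmaps : ∀ v ∈ (Finset.univ : Finset (Fin n)), p v ∈ (Finset.univ : Finset (Fin k)) :=
      fun v _ => Finset.mem_univ (p v)
    have h := Finset.sum_fiberwise_of_maps_to hmaps (fun v => deg w v * (y v * y v))
    rw [← h]
    refine Finset.sum_congr rfl (fun i _ => ?_)
    rw [← hAfib i, hvoldef]
    simp only []
    rw [Finset.mul_sum]
    refine Finset.sum_congr rfl (fun v hv => ?_)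
    rw [hyA i v hv]
    ring
  have hxx : ∑ v, x v * x v = ∑ i, (c i * c i) * vol i := by
    rw [← hvolsum]
    exact Finset.sum_congr rfl (fun v _ => hxsq v)
  have hvolpos : ∀ i, 0 < vol i := fun i => Finset.sum_pos (fun v _ => hdeg v) (hne i)
  have hcut : ∀ i, cut i < lam / 2 * vol i := by
    intro i
    have h : cut i / vol i < lam / 2 := hcon i
    exact (div_lt_iff₀ (hvolpos i)).1 h
  obtain ⟨i0, hi0⟩ := Function.ne_iff.1 hc0
  have hstrict : ∑ i, (c i * c i) * cut i < ∑ i, (c i * c i) * (lam / 2 * vol i) :=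
    Finset.sum_lt_sum (fun i _ => mul_le_mul_of_nonneg_left (hcut i).le (mul_self_nonneg _))
      ⟨i0, Finset.mem_univ _, mul_lt_mul_of_pos_left (hcut i0) (mul_self_pos.2 hi0)⟩
  have hfin : ∑ i, (c i * c i) * (lam / 2 * vol i) = lam / 2 * ∑ i, (c i * c i) * vol i := by
    rw [Finset.mul_sum]
    exact Finset.sum_congr rfl (fun i _ => by ring)
  have h1 : lam * ∑ i, (c i * c i) * vol i ≤ Q := by
    rw [← hxx]; exact hQge
  linarith [hQbound, hstrict, hfin, h1]
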